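/- In the group T'_{8·3^q}, the commutator subgroup is ⟨a, b⟩, which is isomorphic to the quaternion group Q₈, and the abelianization is cyclic of order 3^q generated by the image of w. -/

import Mathlib

section zmodHom
variable {G : Type*} [Group G]

def zmodHom (n : ℕ) (x : G) (hx : x ^ n = 1) : Multiplicative (ZMod n) →* G :=
  AddMonoidHom.toMultiplicativeLeft
    (ZMod.lift n ⟨zmultiplesHom (Additive G) (Additive.ofMul x), by
      simp only [zmultiplesHom_apply]
      apply Additive.toMul.injective
      simp [hx]⟩)

lemma zmodHom_intCast (n : ℕ) (x : G) (hx : x ^ n = 1) (k : ℤ) :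
    zmodHom n x hx (Multiplicative.ofAdd ((k : ZMod n))) = x ^ k := by
  simp [zmodHom, AddMonoidHom.coe_toMultiplicativeLeft, ZMod.lift_coe]

lemma zmodHom_apply (n : ℕ) [NeZero n] (x : G) (hx : x ^ n = 1) (i : ZMod n) :
    zmodHom n x hx (Multiplicative.ofAdd i) = x ^ i.val := by
  have h : ((i.val : ℤ) : ZMod n) = i := by
    push_cast
    exact ZMod.natCast_rightInverse i
  conv_lhs => rw [← h]
  rw [zmodHom_intCast, zpow_natCast]

lemma zmod_eq_ofAdd_one_pow (n : ℕ) [NeZero n] (g : Multiplicative (ZMod n)) :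
    g = (Multiplicative.ofAdd (1 : ZMod n)) ^ (Multiplicative.toAdd g).val := by
  set i := Multiplicative.toAdd g with hi
  have : g = Multiplicative.ofAdd i := rfl
  rw [this, ← ofAdd_nsmul]
  congr 1
  simp only [nsmul_eq_mul, mul_one]
  exact (ZMod.natCast_rightInverse i).symm

end zmodHom

open QuaternionGroup

abbrev Q8 := QuaternionGroup 2

def sigf : Q8 → Q8
  | .a i => if i = 0 then .a 0 else if i = 1 then .xa 0 else if i = 2 then .a 2 else .xa 2
  | .xa i => if i = 0 then .xa 3 else if i = 1 then .a 3 else if i = 2 then .xa 1 else .a 1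

def sig : MulAut Q8 :=
  { toFun := sigf
    invFun := sigf ∘ sigf
    left_inv := by decide
    right_inv := by decide
    map_mul' := by decide }

lemma sig_cube : sig ^ 3 = 1 := by
  have h : ∀ x : Q8, sig (sig (sig x)) = x := by decide
  ext x
  simp only [pow_succ, pow_zero, one_mul, MulAut.mul_apply, MulAut.one_apply]
  exact h x

lemma sig_pow_q (q : ℕ) (hq : 1 ≤ q) : sig ^ (3 ^ q) = 1 := by
  have : 3 ^ q = 3 * 3 ^ (q - 1) := by
    rw [← pow_succ']; congr 1; omega
  rw [this, pow_mul, sig_cube, one_pow]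

lemma Q8_closure_top : Subgroup.closure ({.a 1, .xa 0} : Set Q8) = ⊤ := by
  rw [Subgroup.eq_top_iff']
  intro x
  have h1 : (QuaternionGroup.a 1 : Q8) ∈ Subgroup.closure ({.a 1, .xa 0} : Set Q8) :=
    Subgroup.subset_closure (Set.mem_insert _ _)
  have h2 : (QuaternionGroup.xa 0 : Q8) ∈ Subgroup.closure ({.a 1, .xa 0} : Set Q8) :=
    Subgroup.subset_closure (Set.mem_insert_of_mem _ rfl)
  cases x with
  | a i =>
    have : (QuaternionGroup.a i : Q8) = (QuaternionGroup.a 1) ^ i.val := by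
      rw [a_one_pow, ZMod.natCast_rightInverse i]
    rw [this]; exact pow_mem h1 _
  | xa i =>
    have : (QuaternionGroup.xa i : Q8) = QuaternionGroup.xa 0 * (QuaternionGroup.a 1) ^ i.val := by
      rw [a_one_pow, ZMod.natCast_rightInverse i, xa_mul_a, zero_add]
    rw [this]; exact mul_mem h2 (pow_mem h1 _)

/-- Relations of the generalized binary tetrahedral group
`T'_{8·3^q} = ⟨b, a, w | a² = b² = (ab)², a⁴ = w^{3^q} = 1, wa = bw, wb = abw⟩`,
with `b` the letter `0`, `a` the letter `1` and `w` the letter `2`. -/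
def TprimeRels (q : ℕ) : Set (FreeGroup (Fin 3)) :=
  { (FreeGroup.of 1) ^ 2 * ((FreeGroup.of 0) ^ 2)⁻¹,
    (FreeGroup.of 1) ^ 2 * ((FreeGroup.of 1 * FreeGroup.of 0) ^ 2)⁻¹,
    (FreeGroup.of 1) ^ 4,
    (FreeGroup.of 2) ^ (3 ^ q),
    (FreeGroup.of 2 * FreeGroup.of 1) * (FreeGroup.of 0 * FreeGroup.of 2)⁻¹,
    (FreeGroup.of 2 * FreeGroup.of 0) *
      (FreeGroup.of 1 * FreeGroup.of 0 * FreeGroup.of 2)⁻¹ }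

/-- The generalized binary tetrahedral group `T'_{8·3^q}`. -/
abbrev Tprime (q : ℕ) := PresentedGroup (TprimeRels q)

/-- The generator `b` of `T'_{8·3^q}`. -/
def Tprime.b (q : ℕ) : Tprime q := PresentedGroup.of 0

/-- The generator `a` of `T'_{8·3^q}`. -/
def Tprime.a (q : ℕ) : Tprime q := PresentedGroup.of 1

/-- The generator `w` of `T'_{8·3^q}`. -/
def Tprime.w (q : ℕ) : Tprime q := PresentedGroup.of 2

namespace Tp
variable (q : ℕ)

local notation "A" => Tprime.a q
local notation "B" => Tprime.b q
local notation "W" => Tprime.w q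

lemma rel_mem {r : FreeGroup (Fin 3)} (h : r ∈ TprimeRels q) :
    PresentedGroup.mk (TprimeRels q) r = 1 :=
  (QuotientGroup.eq_one_iff r).mpr (Subgroup.subset_normalClosure h)

lemma rel1 : A ^ 2 = B ^ 2 := by
  have := rel_mem q (r := (FreeGroup.of 1) ^ 2 * ((FreeGroup.of 0) ^ 2)⁻¹)
    (Set.mem_insert _ _)
  rw [map_mul, map_inv, map_pow, map_pow, mul_inv_eq_one] at this
  exact this

lemma rel2 : A ^ 2 = (A * B) ^ 2 := by
  have := rel_mem q (r := (FreeGroup.of 1) ^ 2 * ((FreeGroup.of 1 * FreeGroup.of 0) ^ 2)⁻¹)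
    (Set.mem_insert_of_mem _ (Set.mem_insert _ _))
  rw [map_mul, map_inv, map_pow, map_pow, map_mul, mul_inv_eq_one] at this
  exact this

lemma rel3 : A ^ 4 = 1 := by
  have := rel_mem q (r := (FreeGroup.of 1) ^ 4)
    (Set.mem_insert_of_mem _ (Set.mem_insert_of_mem _ (Set.mem_insert _ _)))
  rwa [map_pow] at this

lemma rel4 : W ^ (3 ^ q) = 1 := by
  have := rel_mem q (r := (FreeGroup.of 2) ^ (3 ^ q))
    (Set.mem_insert_of_mem _ (Set.mem_insert_of_mem _ (Set.mem_insert_of_mem _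
      (Set.mem_insert _ _))))
  rwa [map_pow] at this

lemma rel5 : W * A = B * W := by
  have := rel_mem q (r := (FreeGroup.of 2 * FreeGroup.of 1) * (FreeGroup.of 0 * FreeGroup.of 2)⁻¹)
    (Set.mem_insert_of_mem _ (Set.mem_insert_of_mem _ (Set.mem_insert_of_mem _
      (Set.mem_insert_of_mem _ (Set.mem_insert _ _)))))
  rw [map_mul, map_inv, map_mul, map_mul, mul_inv_eq_one] at this
  exact this

lemma rel6 : W * B = A * B * W := by
  have := rel_mem q (r := (FreeGroup.of 2 * FreeGroup.of 0) *
      (FreeGroup.of 1 * FreeGroup.of 0 * FreeGroup.of 2)⁻¹)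
    (Set.mem_insert_of_mem _ (Set.mem_insert_of_mem _ (Set.mem_insert_of_mem _
      (Set.mem_insert_of_mem _ (Set.mem_insert_of_mem _ rfl)))))
  rw [map_mul, map_inv, map_mul, map_mul, map_mul, mul_inv_eq_one] at this
  exact this

lemma hAB : A * B = B * A⁻¹ := by
  have h := rel2 q
  have h2 : A ^ 2 = A * B * A * B := by rw [h]; simp [pow_two, mul_assoc]
  have h3 : A = B * A * B := by
    have := congrArg (fun x => A⁻¹ * x) h2
    simpa [pow_succ, mul_assoc] using this
  calc A * B = (B * A * B) * B := by rw [← h3]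
    _ = B * A * B ^ 2 := by simp [pow_two, mul_assoc]
    _ = B * A * A ^ 2 := by rw [← rel1]
    _ = B * (A ^ 4 * A⁻¹) := by group
    _ = B * A⁻¹ := by rw [rel3]; group

lemma hAinv : A⁻¹ = A ^ 3 := by
  have := rel3 q
  calc A⁻¹ = A ^ 4 * A⁻¹ := by rw [this]; group
    _ = A ^ 3 := by group

lemma hBA : B * A = A⁻¹ * B := by
  have := hAB q
  calc B * A = A⁻¹ * (A * B) * A := by group
    _ = A⁻¹ * (B * A⁻¹) * A := by rw [this]
    _ = A⁻¹ * B := by group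

lemma hA2B : A ^ 2 * B = B * A ^ 2 := by
  have h := hAB q
  calc A ^ 2 * B = A * (A * B) := by rw [pow_two, mul_assoc]
    _ = A * (B * A⁻¹) := by rw [h]
    _ = (A * B) * A⁻¹ := by group
    _ = B * A⁻¹ * A⁻¹ := by rw [h]
    _ = B * (A⁻¹ * A⁻¹) := by group
    _ = B * (A ^ 3 * A ^ 3) := by rw [← hAinv]
    _ = B * (A ^ 4 * A ^ 2) := by group
    _ = B * A ^ 2 := by rw [rel3]; group

lemma hB2 : B ^ 2 = A ^ 2 := (rel1 q).symm

lemma hB4 : B ^ 4 = 1 := by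
  calc B ^ 4 = (B ^ 2) ^ 2 := by group
    _ = (A ^ 2) ^ 2 := by rw [hB2]
    _ = A ^ 4 := by group
    _ = 1 := rel3 q


instance : NeZero (2 * 2) := ⟨by norm_num⟩
instance : NeZero (3 ^ q) := ⟨pow_ne_zero q (by norm_num)⟩

def phiC (hq : 1 ≤ q) : Multiplicative (ZMod (3 ^ q)) →* MulAut Q8 :=
  zmodHom (3 ^ q) sig (sig_pow_q q hq)

lemma one_lt_3q (hq : 1 ≤ q) : 1 < 3 ^ q := by
  calc 1 < 3 ^ 1 := by norm_num
    _ ≤ 3 ^ q := Nat.pow_le_pow_right (by norm_num) hq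

lemma phiC_one (hq : 1 ≤ q) : phiC q hq (Multiplicative.ofAdd 1) = sig := by
  haveI : Fact (1 < 3 ^ q) := ⟨one_lt_3q q hq⟩
  rw [phiC, zmodHom_apply, ZMod.val_one, pow_one]

abbrev SDP (hq : 1 ≤ q) := Q8 ⋊[phiC q hq] Multiplicative (ZMod (3 ^ q))

variable {q} in
def fgen (hq : 1 ≤ q) : Fin 3 → SDP q hq
  | 0 => .inl (.xa 0)
  | 1 => .inl (.a 1)
  | 2 => .inr (Multiplicative.ofAdd 1)

lemma ofAdd_one_pow_3q : (Multiplicative.ofAdd (1 : ZMod (3 ^ q))) ^ (3 ^ q) = 1 := by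
  rw [← ofAdd_nsmul]
  simp only [nsmul_eq_mul, mul_one, ZMod.natCast_self, ofAdd_zero]

lemma conj_inr (hq : 1 ≤ q) (n : Q8) :
    (SemidirectProduct.inr (Multiplicative.ofAdd 1) : SDP q hq) * .inl n =
      SemidirectProduct.inl (sig n) * .inr (Multiplicative.ofAdd 1) := by
  have h := SemidirectProduct.inl_aut (φ := phiC q hq) (Multiplicative.ofAdd 1) n
  rw [phiC_one] at h
  rw [h, map_inv, inv_mul_cancel_right]

def Phi (hq : 1 ≤ q) : Tprime q →* SDP q hq :=
  PresentedGroup.toGroup (f := fgen hq) (by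
    intro r hr
    have hr' : r = (FreeGroup.of 1) ^ 2 * ((FreeGroup.of 0) ^ 2)⁻¹ ∨
        r = (FreeGroup.of 1) ^ 2 * ((FreeGroup.of 1 * FreeGroup.of 0) ^ 2)⁻¹ ∨
        r = (FreeGroup.of 1) ^ 4 ∨
        r = (FreeGroup.of 2) ^ (3 ^ q) ∨
        r = (FreeGroup.of 2 * FreeGroup.of 1) * (FreeGroup.of 0 * FreeGroup.of 2)⁻¹ ∨
        r = (FreeGroup.of 2 * FreeGroup.of 0) *
          (FreeGroup.of 1 * FreeGroup.of 0 * FreeGroup.of 2)⁻¹ := by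
      simpa [TprimeRels, Set.mem_insert_iff] using hr
    set il : Q8 →* SDP q hq := SemidirectProduct.inl with hil
    set ir : Multiplicative (ZMod (3 ^ q)) →* SDP q hq := SemidirectProduct.inr with hir
    have f0 : FreeGroup.lift (fgen hq) (FreeGroup.of (0 : Fin 3)) = il (.xa 0) :=
      FreeGroup.lift_apply_of
    have f1 : FreeGroup.lift (fgen hq) (FreeGroup.of (1 : Fin 3)) = il (.a 1) :=
      FreeGroup.lift_apply_of
    have f2 : FreeGroup.lift (fgen hq) (FreeGroup.of (2 : Fin 3)) =
        ir (Multiplicative.ofAdd 1) := FreeGroup.lift_apply_of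
    rcases hr' with rfl | rfl | rfl | rfl | rfl | rfl
    · rw [map_mul, map_inv, map_pow, map_pow, f0, f1, ← map_pow il, ← map_pow il, ← map_inv il,
        ← map_mul il, show ((QuaternionGroup.a 1 : Q8) ^ 2 * (((QuaternionGroup.xa 0 : Q8)) ^ 2)⁻¹)
          = 1 from by decide, map_one]
    · rw [map_mul, map_inv, map_pow, map_pow, map_mul, f0, f1, ← map_mul il, ← map_pow il,
        ← map_pow il, ← map_inv il, ← map_mul il, show ((QuaternionGroup.a 1 : Q8) ^ 2 *
          (((QuaternionGroup.a 1 * QuaternionGroup.xa 0 : Q8)) ^ 2)⁻¹) = 1 from by decide, map_one]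
    · rw [map_pow, f1, ← map_pow il, show ((QuaternionGroup.a 1 : Q8) ^ 4) = 1 from by decide,
        map_one]
    · rw [map_pow, f2, ← map_pow ir, ofAdd_one_pow_3q, map_one]
    · rw [map_mul, map_inv, map_mul, map_mul, f0, f1, f2, mul_inv_eq_one]
      rw [hil, hir]
      rw [conj_inr q hq (QuaternionGroup.a 1),
        show sig (QuaternionGroup.a 1) = (QuaternionGroup.xa 0 : Q8) from by decide]
    · rw [map_mul, map_inv, map_mul, map_mul, map_mul, f0, f1, f2, mul_inv_eq_one]
      rw [← map_mul il, hil, hir]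
      rw [conj_inr q hq (QuaternionGroup.xa 0),
        show sig (QuaternionGroup.xa 0) =
          (QuaternionGroup.a 1 * QuaternionGroup.xa 0 : Q8) from by decide])

def psi : Multiplicative (ZMod (2 * 2)) →* Tprime q :=
  zmodHom (2 * 2) A (by rw [show 2 * 2 = 4 from rfl]; exact rel3 q)

lemma psi_apply (i : ZMod (2 * 2)) : psi q (Multiplicative.ofAdd i) = A ^ i.val :=
  zmodHom_apply _ _ _ _

lemma hApowB : ∀ m : ℕ, A ^ m * B = B * (A ^ m)⁻¹ := by
  intro m
  induction m with
  | zero => simp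
  | succ m ih =>
    calc A ^ (m + 1) * B = A * (A ^ m * B) := by rw [pow_succ']; rw [mul_assoc]
      _ = A * (B * (A ^ m)⁻¹) := by rw [ih]
      _ = (A * B) * (A ^ m)⁻¹ := by rw [mul_assoc]
      _ = B * A⁻¹ * (A ^ m)⁻¹ := by rw [hAB]
      _ = B * (A ^ m * A)⁻¹ := by rw [mul_inv_rev, mul_assoc]
      _ = B * (A ^ (m + 1))⁻¹ := by rw [pow_succ]

lemma hpsiB (i : ZMod (2 * 2)) :
    psi q (Multiplicative.ofAdd i) * B = B * (psi q (Multiplicative.ofAdd i))⁻¹ := by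
  rw [psi_apply]; exact hApowB q i.val

lemma hpsi_swap (i j : ZMod (2 * 2)) :
    psi q (Multiplicative.ofAdd j) * (psi q (Multiplicative.ofAdd i))⁻¹ =
      (psi q (Multiplicative.ofAdd i))⁻¹ * psi q (Multiplicative.ofAdd j) := by
  have h : Commute (psi q (Multiplicative.ofAdd i)) (psi q (Multiplicative.ofAdd j)) := by
    rw [psi_apply, psi_apply]; exact (Commute.refl A).pow_pow _ _
  exact h.inv_left.symm.eq

variable {q} in
def fnf : Q8 → Tprime q
  | .a i => psi q (Multiplicative.ofAdd i)
  | .xa i => Tprime.b q * psi q (Multiplicative.ofAdd i)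

lemma psi2 : psi q (Multiplicative.ofAdd ((2 : ℕ) : ZMod (2 * 2))) = A ^ 2 := by
  rw [psi_apply, show (((2 : ℕ) : ZMod (2 * 2))).val = 2 from by decide]

def fn : Q8 →* Tprime q :=
  MonoidHom.mk' fnf (by
    intro x y
    cases x with
    | a i =>
      cases y with
      | a j =>
        show fnf (QuaternionGroup.a i * QuaternionGroup.a j) = _
        rw [a_mul_a]
        show psi q (Multiplicative.ofAdd (i + j)) =
          psi q (Multiplicative.ofAdd i) * psi q (Multiplicative.ofAdd j)
        rw [ofAdd_add, map_mul]
      | xa j =>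
        show fnf (QuaternionGroup.a i * QuaternionGroup.xa j) = _
        rw [a_mul_xa]
        show Tprime.b q * psi q (Multiplicative.ofAdd (j - i)) =
          psi q (Multiplicative.ofAdd i) * (Tprime.b q * psi q (Multiplicative.ofAdd j))
        have e : (Multiplicative.ofAdd (j - i)) =
            Multiplicative.ofAdd j * (Multiplicative.ofAdd i)⁻¹ := by
          rw [sub_eq_add_neg, ofAdd_add, ofAdd_neg]
        rw [e, map_mul, map_inv, hpsi_swap, ← mul_assoc, ← mul_assoc, ← hpsiB]
    | xa i =>
      cases y with
      | a j =>
        show fnf (QuaternionGroup.xa i * QuaternionGroup.a j) = _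
        rw [xa_mul_a]
        show Tprime.b q * psi q (Multiplicative.ofAdd (i + j)) =
          Tprime.b q * psi q (Multiplicative.ofAdd i) * psi q (Multiplicative.ofAdd j)
        rw [ofAdd_add, map_mul, ← mul_assoc]
      | xa j =>
        show fnf (QuaternionGroup.xa i * QuaternionGroup.xa j) = _
        rw [xa_mul_xa]
        show psi q (Multiplicative.ofAdd (((2 : ℕ) : ZMod (2 * 2)) + j - i)) =
          Tprime.b q * psi q (Multiplicative.ofAdd i) *
            (Tprime.b q * psi q (Multiplicative.ofAdd j))
        have e : (Multiplicative.ofAdd (((2 : ℕ) : ZMod (2 * 2)) + j - i)) =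
            Multiplicative.ofAdd ((2 : ℕ) : ZMod (2 * 2)) *
              (Multiplicative.ofAdd j * (Multiplicative.ofAdd i)⁻¹) := by
          rw [sub_eq_add_neg, add_assoc, ofAdd_add, ofAdd_add, ofAdd_neg]
        rw [e, map_mul, map_mul, map_inv, psi2, ← hB2, hpsi_swap]
        calc Tprime.b q ^ 2 * ((psi q (Multiplicative.ofAdd i))⁻¹ * psi q (Multiplicative.ofAdd j))
            = Tprime.b q * (Tprime.b q * (psi q (Multiplicative.ofAdd i))⁻¹) *
              psi q (Multiplicative.ofAdd j) := by
              rw [pow_two]; simp only [mul_assoc]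
          _ = Tprime.b q * (psi q (Multiplicative.ofAdd i) * Tprime.b q) *
              psi q (Multiplicative.ofAdd j) := by rw [← hpsiB]
          _ = Tprime.b q * psi q (Multiplicative.ofAdd i) *
              (Tprime.b q * psi q (Multiplicative.ofAdd j)) := by simp only [mul_assoc])

def fg : Multiplicative (ZMod (3 ^ q)) →* Tprime q := zmodHom (3 ^ q) W (rel4 q)

lemma fn_a0 : fn q (.a 0) = 1 := by
  show psi q (Multiplicative.ofAdd 0) = 1
  rw [ofAdd_zero, map_one]

lemma fn_a1 : fn q (.a 1) = A := by
  show psi q (Multiplicative.ofAdd 1) = A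
  rw [psi_apply, show (1 : ZMod (2 * 2)).val = 1 from by decide, pow_one]

lemma fn_a2 : fn q (.a 2) = A ^ 2 := by
  show psi q (Multiplicative.ofAdd 2) = A ^ 2
  rw [psi_apply, show (2 : ZMod (2 * 2)).val = 2 from by decide]

lemma fn_a3 : fn q (.a 3) = A ^ 3 := by
  show psi q (Multiplicative.ofAdd 3) = A ^ 3
  rw [psi_apply, show (3 : ZMod (2 * 2)).val = 3 from by decide]

lemma fn_xa0 : fn q (.xa 0) = B := by
  show B * psi q (Multiplicative.ofAdd 0) = B
  rw [ofAdd_zero, map_one, mul_one]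

lemma fn_xa1 : fn q (.xa 1) = B * A := by
  show B * psi q (Multiplicative.ofAdd 1) = B * A
  rw [psi_apply, show (1 : ZMod (2 * 2)).val = 1 from by decide, pow_one]

lemma fn_xa2 : fn q (.xa 2) = B * A ^ 2 := by
  show B * psi q (Multiplicative.ofAdd 2) = B * A ^ 2
  rw [psi_apply, show (2 : ZMod (2 * 2)).val = 2 from by decide]

lemma fn_xa3 : fn q (.xa 3) = B * A ^ 3 := by
  show B * psi q (Multiplicative.ofAdd 3) = B * A ^ 3
  rw [psi_apply, show (3 : ZMod (2 * 2)).val = 3 from by decide]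

lemma fg_one (hq : 1 ≤ q) : fg q (Multiplicative.ofAdd 1) = W := by
  haveI : Fact (1 < 3 ^ q) := ⟨one_lt_3q q hq⟩
  rw [fg, zmodHom_apply, ZMod.val_one, pow_one]

lemma hWA2 : W * A ^ 2 = A ^ 2 * W := by
  calc W * A ^ 2 = W * A * A := by rw [pow_two, ← mul_assoc]
    _ = B * W * A := by rw [rel5]
    _ = B * (W * A) := by rw [mul_assoc]
    _ = B * (B * W) := by rw [rel5 q]
    _ = B * B * W := by rw [mul_assoc]
    _ = B ^ 2 * W := by rw [← pow_two]
    _ = A ^ 2 * W := by rw [hB2]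

lemma hWA3 : W * A ^ 3 = B * A ^ 2 * W := by
  calc W * A ^ 3 = W * A ^ 2 * A := by rw [pow_succ, ← mul_assoc]
    _ = A ^ 2 * (W * A) := by rw [hWA2, mul_assoc]
    _ = A ^ 2 * (B * W) := by rw [rel5]
    _ = (A ^ 2 * B) * W := by rw [mul_assoc]
    _ = B * A ^ 2 * W := by rw [hA2B]

lemma base : ∀ n : Q8, fn q (sig n) = W * fn q n * W⁻¹ := by
  have hn : ∀ m : Q8, m = .a 0 ∨ m = .a 1 ∨ m = .a 2 ∨ m = .a 3 ∨
      m = .xa 0 ∨ m = .xa 1 ∨ m = .xa 2 ∨ m = .xa 3 := by decide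
  intro n
  rw [eq_mul_inv_iff_mul_eq]
  rcases hn n with rfl | rfl | rfl | rfl | rfl | rfl | rfl | rfl
  · rw [show sig (QuaternionGroup.a 0) = (QuaternionGroup.a 0 : Q8) from by decide, fn_a0]
    rw [one_mul, mul_one]
  · rw [show sig (QuaternionGroup.a 1) = (QuaternionGroup.xa 0 : Q8) from by decide, fn_xa0,
      fn_a1]
    exact (rel5 q).symm
  · rw [show sig (QuaternionGroup.a 2) = (QuaternionGroup.a 2 : Q8) from by decide, fn_a2]
    exact (hWA2 q).symm
  · rw [show sig (QuaternionGroup.a 3) = (QuaternionGroup.xa 2 : Q8) from by decide, fn_xa2,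
      fn_a3]
    exact (hWA3 q).symm
  · rw [show sig (QuaternionGroup.xa 0) = (QuaternionGroup.xa 3 : Q8) from by decide, fn_xa3,
      fn_xa0]
    rw [← hAinv, ← hAB]
    exact (rel6 q).symm
  · rw [show sig (QuaternionGroup.xa 1) = (QuaternionGroup.a 3 : Q8) from by decide, fn_a3,
      fn_xa1]
    symm
    calc W * (B * A) = (W * B) * A := by rw [mul_assoc]
      _ = A * B * (W * A) := by rw [rel6, mul_assoc]
      _ = A * B * (B * W) := by rw [rel5]
      _ = A * (B * B) * W := by simp only [mul_assoc]
      _ = A * B ^ 2 * W := by rw [pow_two]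
      _ = A * A ^ 2 * W := by rw [hB2]
      _ = A ^ 3 * W := by rw [← pow_succ']
  · rw [show sig (QuaternionGroup.xa 2) = (QuaternionGroup.xa 1 : Q8) from by decide, fn_xa1,
      fn_xa2]
    symm
    calc W * (B * A ^ 2) = (W * B) * A ^ 2 := by rw [mul_assoc]
      _ = A * B * (W * A ^ 2) := by rw [rel6, mul_assoc]
      _ = A * B * (A ^ 2 * W) := by rw [hWA2]
      _ = A * (B * A ^ 2) * W := by simp only [mul_assoc]
      _ = A * (A ^ 2 * B) * W := by rw [← hA2B]
      _ = (A * A ^ 2) * B * W := by simp only [mul_assoc]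
      _ = A ^ 3 * B * W := by rw [← pow_succ']
      _ = A⁻¹ * B * W := by rw [← hAinv]
      _ = B * A * W := by rw [← hBA]
  · rw [show sig (QuaternionGroup.xa 3) = (QuaternionGroup.a 1 : Q8) from by decide, fn_a1,
      fn_xa3]
    symm
    calc W * (B * A ^ 3) = (W * B) * A ^ 3 := by rw [mul_assoc]
      _ = A * B * (W * A ^ 3) := by rw [rel6, mul_assoc]
      _ = A * B * (B * A ^ 2 * W) := by rw [hWA3]
      _ = A * (B * B) * (A ^ 2 * W) := by simp only [mul_assoc]
      _ = A * B ^ 2 * (A ^ 2 * W) := by rw [← pow_two]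
      _ = A * A ^ 2 * (A ^ 2 * W) := by rw [hB2]
      _ = A * (A ^ 2 * A ^ 2 * W) := by simp only [mul_assoc]
      _ = A * (A ^ (2 + 2) * W) := by rw [pow_add]
      _ = A * (A ^ 4 * W) := by norm_num
      _ = A * W := by rw [rel3, one_mul]

lemma key (hq : 1 ≤ q) : ∀ (g : Multiplicative (ZMod (3 ^ q))) (n : Q8),
    fn q (phiC q hq g n) = fg q g * fn q n * (fg q g)⁻¹ := by
  let S : Subgroup (Multiplicative (ZMod (3 ^ q))) :=
    { carrier := {g | ∀ n : Q8, fn q (phiC q hq g n) = fg q g * fn q n * (fg q g)⁻¹}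
      one_mem' := by
        intro n
        simp only [map_one, MulAut.one_apply, inv_one, mul_one, one_mul]
      mul_mem' := by
        intro g₁ g₂ h₁ h₂ n
        have : phiC q hq (g₁ * g₂) n = phiC q hq g₁ (phiC q hq g₂ n) := by
          rw [map_mul, MulAut.mul_apply]
        rw [this, h₁, h₂, map_mul, mul_inv_rev]
        simp only [mul_assoc]
      inv_mem' := by
        intro g hg n
        have h1 : phiC q hq g (phiC q hq g⁻¹ n) = n := by
          rw [map_inv, MulAut.inv_def, MulEquiv.apply_symm_apply]
        have h2 := hg (phiC q hq g⁻¹ n)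
        rw [h1] at h2
        rw [show fg q g⁻¹ = (fg q g)⁻¹ from map_inv _ _, h2]
        simp [mul_assoc] }
  have h1 : (Multiplicative.ofAdd (1 : ZMod (3 ^ q))) ∈ S := by
    intro n
    rw [phiC_one q hq, fg_one q hq]
    exact base q n
  intro g n
  have : g ∈ S := by
    rw [zmod_eq_ofAdd_one_pow (3 ^ q) g]
    exact pow_mem h1 _
  exact this n

def Psi (hq : 1 ≤ q) : SDP q hq →* Tprime q :=
  SemidirectProduct.lift (fn q) (fg q) (fun g => MonoidHom.ext (fun n => by
    simpa using key q hq g n))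

lemma Phi_b (hq : 1 ≤ q) : Phi q hq (Tprime.b q) = SemidirectProduct.inl (.xa 0) :=
  PresentedGroup.toGroup.of _

lemma Phi_a (hq : 1 ≤ q) : Phi q hq (Tprime.a q) = SemidirectProduct.inl (.a 1) :=
  PresentedGroup.toGroup.of _

lemma Phi_w (hq : 1 ≤ q) : Phi q hq (Tprime.w q) = SemidirectProduct.inr (Multiplicative.ofAdd 1) :=
  PresentedGroup.toGroup.of _

lemma PsiPhi (hq : 1 ≤ q) : ∀ x, Psi q hq (Phi q hq x) = x := by
  have h : (Psi q hq).comp (Phi q hq) = MonoidHom.id _ := by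
    apply PresentedGroup.ext
    intro x
    fin_cases x
    · show Psi q hq (Phi q hq (Tprime.b q)) = Tprime.b q
      rw [Phi_b, Psi, SemidirectProduct.lift_inl, fn_xa0]
    · show Psi q hq (Phi q hq (Tprime.a q)) = Tprime.a q
      rw [Phi_a, Psi, SemidirectProduct.lift_inl, fn_a1]
    · show Psi q hq (Phi q hq (Tprime.w q)) = Tprime.w q
      rw [Phi_w, Psi, SemidirectProduct.lift_inr, fg_one q hq]
  intro x
  exact DFunLike.congr_fun h x

lemma PhiPsi (hq : 1 ≤ q) : ∀ y, Phi q hq (Psi q hq y) = y := by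
  have h : (Phi q hq).comp (Psi q hq) = MonoidHom.id _ := by
    apply SemidirectProduct.hom_ext
    · apply MonoidHom.ext
      intro n
      simp only [MonoidHom.comp_apply, MonoidHom.id_apply]
      rw [Psi, SemidirectProduct.lift_inl]
      cases n with
      | a i =>
        show Phi q hq (psi q (Multiplicative.ofAdd i)) = _
        rw [psi_apply, map_pow, Phi_a, ← map_pow, a_one_pow, ZMod.natCast_rightInverse i]
      | xa i =>
        show Phi q hq (Tprime.b q * psi q (Multiplicative.ofAdd i)) = _
        rw [map_mul, psi_apply, map_pow, Phi_a, Phi_b, ← map_pow, ← map_mul, a_one_pow,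
          ZMod.natCast_rightInverse i, xa_mul_a, zero_add]
    · apply MonoidHom.ext
      intro g
      simp only [MonoidHom.comp_apply, MonoidHom.id_apply]
      rw [Psi, SemidirectProduct.lift_inr]
      rw [zmod_eq_ofAdd_one_pow (3 ^ q) g, map_pow, map_pow, fg_one q hq, Phi_w]
      exact (map_pow _ _ _).symm
  intro y
  exact DFunLike.congr_fun h y

lemma injPhi (hq : 1 ≤ q) : Function.Injective (Phi q hq) :=
  Function.LeftInverse.injective (PsiPhi q hq)

lemma hmapN (hq : 1 ≤ q) : (Subgroup.closure {Tprime.a q, Tprime.b q}).map (Phi q hq) =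
    (SemidirectProduct.inl : Q8 →* SDP q hq).range := by
  rw [MonoidHom.map_closure, Set.image_pair, Phi_a, Phi_b,
    show ({SemidirectProduct.inl (QuaternionGroup.a 1), SemidirectProduct.inl (QuaternionGroup.xa 0)} :
      Set (SDP q hq)) = (SemidirectProduct.inl : Q8 →* SDP q hq) ''
        {QuaternionGroup.a 1, QuaternionGroup.xa 0} from (Set.image_pair _ _ _).symm,
    ← MonoidHom.map_closure, Q8_closure_top, ← MonoidHom.range_eq_map]

lemma hNker (hq : 1 ≤ q) : Subgroup.closure {Tprime.a q, Tprime.b q} =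
    (SemidirectProduct.rightHom.comp (Phi q hq)).ker := by
  ext x
  constructor
  · intro hx
    have : Phi q hq x ∈ (SemidirectProduct.inl : Q8 →* SDP q hq).range := by
      rw [← hmapN q hq]
      exact Subgroup.mem_map_of_mem _ hx
    obtain ⟨n, hn⟩ := this
    rw [MonoidHom.mem_ker, MonoidHom.comp_apply, ← hn, SemidirectProduct.rightHom_inl]
  · intro hx
    rw [MonoidHom.mem_ker, MonoidHom.comp_apply] at hx
    have : Phi q hq x ∈ (SemidirectProduct.inl : Q8 →* SDP q hq).range := by
      rw [SemidirectProduct.range_inl_eq_ker_rightHom, MonoidHom.mem_ker]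
      exact hx
    rw [← hmapN q hq] at this
    obtain ⟨y, hy, hyx⟩ := this
    rwa [← injPhi q hq hyx]

noncomputable def isoQ8 (hq : 1 ≤ q) :
    (Subgroup.closure {Tprime.a q, Tprime.b q} : Subgroup (Tprime q)) ≃* Q8 :=
  (((Subgroup.closure {Tprime.a q, Tprime.b q}).equivMapOfInjective _ (injPhi q hq)).trans
    (MulEquiv.subgroupCongr (hmapN q hq))).trans
    (MonoidHom.ofInjective SemidirectProduct.inl_injective).symm

lemma ab_relations : Abelianization.of (Tprime.a q) = 1 ∧ Abelianization.of (Tprime.b q) = 1 := by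
  set x := Abelianization.of (Tprime.a q) with hx
  set y := Abelianization.of (Tprime.b q) with hy
  set z := Abelianization.of (Tprime.w q) with hz
  have e1 : x ^ 2 = y ^ 2 := by rw [hx, hy, ← map_pow, ← map_pow, rel1]
  have e2 : x ^ 2 = (x * y) ^ 2 := by rw [hx, hy, ← map_mul, ← map_pow, ← map_pow, rel2]
  have hy2 : y ^ 2 = 1 := by
    have h := e2
    rw [mul_pow] at h
    exact left_eq_mul.mp h
  have e5 : z * x = y * z := by rw [hx, hy, hz, ← map_mul, ← map_mul, rel5]
  have hxy : x = y := by
    have h : z * x = z * y := by rw [e5, mul_comm]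
    exact mul_left_cancel h
  have e6 : z * y = x * y * z := by rw [hx, hy, hz, ← map_mul, ← map_mul, ← map_mul, rel6]
  have hx1 : x = 1 := by
    have h : z * y = z * (x * y) := by rw [e6, mul_comm]
    exact right_eq_mul.mp (mul_left_cancel h)
  exact ⟨hx1, hxy ▸ hx1⟩

lemma a_mem : Tprime.a q ∈ commutator (Tprime q) :=
  (QuotientGroup.eq_one_iff _).mp (ab_relations q).1

lemma b_mem : Tprime.b q ∈ commutator (Tprime q) :=
  (QuotientGroup.eq_one_iff _).mp (ab_relations q).2

lemma part1 (hq : 1 ≤ q) :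
    commutator (Tprime q) = Subgroup.closure {Tprime.a q, Tprime.b q} := by
  apply le_antisymm
  · rw [hNker q hq]
    exact Abelianization.commutator_subset_ker _
  · rw [Subgroup.closure_le]
    intro t ht
    rw [Set.mem_insert_iff, Set.mem_singleton_iff] at ht
    rcases ht with rfl | rfl
    · exact a_mem q
    · exact b_mem q

lemma part3 : Subgroup.zpowers (Abelianization.of (Tprime.w q)) = ⊤ := by
  rw [Subgroup.eq_top_iff']
  intro x
  refine QuotientGroup.induction_on x ?_
  intro y
  refine PresentedGroup.generated_by _ (Subgroup.comap (Abelianization.of (G := Tprime q))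
    (Subgroup.zpowers (Abelianization.of (Tprime.w q)))) ?_ y
  intro j
  fin_cases j
  · show Abelianization.of (Tprime.b q) ∈ Subgroup.zpowers (Abelianization.of (Tprime.w q))
    rw [(ab_relations q).2]
    exact one_mem _
  · show Abelianization.of (Tprime.a q) ∈ Subgroup.zpowers (Abelianization.of (Tprime.w q))
    rw [(ab_relations q).1]
    exact one_mem _
  · exact Subgroup.mem_zpowers _

lemma part4 (hq : 1 ≤ q) : Nat.card (Abelianization (Tprime q)) = 3 ^ q := by
  classical
  set π := SemidirectProduct.rightHom.comp (Phi q hq) with hπ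
  have πW : π (Tprime.w q) = Multiplicative.ofAdd (1 : ZMod (3 ^ q)) := by
    rw [hπ, MonoidHom.comp_apply, Phi_w, SemidirectProduct.rightHom_inr]
  set F := Abelianization.lift π with hF
  have hsurj : Function.Surjective F := by
    intro g
    refine ⟨(Abelianization.of (Tprime.w q)) ^ (Multiplicative.toAdd g).val, ?_⟩
    rw [map_pow, hF, Abelianization.lift_apply_of, πW, ← zmod_eq_ofAdd_one_pow]
  have hinj : Function.Injective F := by
    rw [injective_iff_map_eq_one]
    intro x hx1
    have hx : x ∈ Subgroup.zpowers (Abelianization.of (Tprime.w q)) := by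
      rw [part3]; exact Subgroup.mem_top x
    obtain ⟨k, hk⟩ := Subgroup.mem_zpowers_iff.mp hx
    rw [← hk] at hx1 ⊢
    rw [map_zpow, hF, Abelianization.lift_apply_of, πW, ← ofAdd_zsmul] at hx1
    have hk0 : ((k : ℤ) : ZMod (3 ^ q)) = 0 := by
      have := ofAdd_eq_one.mp hx1
      rwa [zsmul_eq_mul, mul_one] at this
    have hdvd : ((3 ^ q : ℕ) : ℤ) ∣ k := (ZMod.intCast_zmod_eq_zero_iff_dvd k (3 ^ q)).mp hk0
    obtain ⟨m, rfl⟩ := hdvd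
    rw [zpow_mul, zpow_natCast, ← map_pow, rel4, map_one, one_zpow]
  have hcard : Nat.card (Abelianization (Tprime q)) = Nat.card (Multiplicative (ZMod (3 ^ q))) :=
    Nat.card_congr (MulEquiv.ofBijective F ⟨hinj, hsurj⟩).toEquiv
  rw [hcard, Nat.card_congr (Multiplicative.toAdd (α := ZMod (3 ^ q))), Nat.card_zmod]

end Tp

/-- In `T'_{8·3^q}`, the commutator subgroup is `⟨a, b⟩ ≅ Q₈`, and the abelianization is
cyclic of order `3^q` generated by the image of `w`. -/
theorem commutator_abelianization_Tprime (q : ℕ) (hq : 1 ≤ q) :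
    commutator (Tprime q) = Subgroup.closure {Tprime.a q, Tprime.b q} ∧
      Nonempty ((Subgroup.closure {Tprime.a q, Tprime.b q} : Subgroup (Tprime q)) ≃*
        QuaternionGroup 2) ∧
      Subgroup.zpowers (Abelianization.of (Tprime.w q)) = ⊤ ∧
      Nat.card (Abelianization (Tprime q)) = 3 ^ q :=
  ⟨Tp.part1 q hq, ⟨Tp.isoQ8 q hq⟩, Tp.part3 q, Tp.part4 q hq⟩
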